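/- Let R be a ring, let M be an Artinian R-module, let F, G : ModuleCat R ⥤ ModuleCat R be additive functors such that G preserves monomorphisms, and let α : F ⟶ G be a natural transformation. Then there exists a submodule N of M such that the component of α at the quotient module M ⧸ N (regarded as an object of ModuleCat R) is zero, and every submodule N' of M for which the component of α at M ⧸ N' is zero satisfies N ≤ N'. -/

import Mathlib

set_option linter.unusedSectionVars false
open CategoryTheory

universe u

section aux

variable {R : Type u} [Ring R] {F G : ModuleCat.{u} R ⥤ ModuleCat.{u} R}
  [F.Additive] [G.Additive] (α : F ⟶ G)

lemma ann_of_mono {A B : ModuleCat.{u} R} (i : A ⟶ B) [Mono i] [G.PreservesMonomorphisms]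
    (hB : α.app B = 0) : α.app A = 0 := by
  have h : α.app A ≫ G.map i = 0 ≫ G.map i := by
    rw [← α.naturality, hB, Limits.comp_zero, Limits.zero_comp]
  exact (cancel_mono (G.map i)).mp h

lemma ann_biprod {X Y : ModuleCat.{u} R} (hX : α.app X = 0) (hY : α.app Y = 0) :
    α.app (X ⊞ Y) = 0 := by
  have := Limits.biprod.total (X := X) (Y := Y)
  calc α.app (X ⊞ Y) = F.map (𝟙 (X ⊞ Y)) ≫ α.app (X ⊞ Y) := by simp
    _ = F.map (Limits.biprod.fst ≫ Limits.biprod.inl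
        + Limits.biprod.snd ≫ Limits.biprod.inr) ≫ α.app (X ⊞ Y) := by rw [this]
    _ = 0 := by
        rw [F.map_add, Preadditive.add_comp, F.map_comp, F.map_comp,
          Category.assoc, Category.assoc, α.naturality, α.naturality,
          ← Category.assoc, ← Category.assoc, hX, hY]
        simp

end aux

/-- Every Artinian module `M` has a unique minimal submodule `N` such that the quotient
`M ⧸ N` is annihilated by a natural transformation `α : F ⟶ G` between additive endofunctors
of `ModuleCat R`, provided `G` preserves monomorphisms. -/
theorem exists_minimal_annihilated_quotient (R : Type u) [Ring R]
    (M : Type u) [AddCommGroup M] [Module R M] [IsArtinian R M]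
    (F G : ModuleCat.{u} R ⥤ ModuleCat.{u} R) [F.Additive] [G.Additive]
    [G.PreservesMonomorphisms] (α : F ⟶ G) :
    ∃ N : Submodule R M, α.app (ModuleCat.of R (M ⧸ N)) = 0 ∧
      ∀ N' : Submodule R M, α.app (ModuleCat.of R (M ⧸ N')) = 0 → N ≤ N' := by
  set S : Set (Submodule R M) := {N | α.app (ModuleCat.of R (M ⧸ N)) = 0} with hS
  have htop : (⊤ : Submodule R M) ∈ S := by
    have hz : Limits.IsZero (ModuleCat.of R (M ⧸ (⊤ : Submodule R M))) :=
      ModuleCat.isZero_of_subsingleton _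
    have : Limits.IsZero (F.obj (ModuleCat.of R (M ⧸ (⊤ : Submodule R M)))) :=
      F.map_isZero hz
    exact this.eq_zero_of_src _
  obtain ⟨N, hN, hmin⟩ := IsArtinian.set_has_minimal S ⟨⊤, htop⟩
  refine ⟨N, hN, fun N' hN' => ?_⟩
  -- show N ⊓ N' ∈ S
  have hinf : N ⊓ N' ∈ S := by
    let f : ModuleCat.of R (M ⧸ (N ⊓ N')) ⟶ ModuleCat.of R (M ⧸ N) :=
      ModuleCat.ofHom (Submodule.mapQ (N ⊓ N') N LinearMap.id inf_le_left)
    let g : ModuleCat.of R (M ⧸ (N ⊓ N')) ⟶ ModuleCat.of R (M ⧸ N') :=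
      ModuleCat.ofHom (Submodule.mapQ (N ⊓ N') N' LinearMap.id inf_le_right)
    let i := Limits.biprod.lift f g
    have hmono : Mono i := by
      rw [ModuleCat.mono_iff_injective]
      rw [injective_iff_map_eq_zero]
      intro x hx
      obtain ⟨m, rfl⟩ := Submodule.Quotient.mk_surjective _ x
      have hx' : Limits.biprod.lift f g (Submodule.Quotient.mk m) = 0 := hx
      have hf : f (Submodule.Quotient.mk m) = 0 := by
        rw [← Limits.biprod.lift_fst f g]; erw [comp_apply]; erw [hx']; rw [map_zero]
      have hg : g (Submodule.Quotient.mk m) = 0 := by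
        rw [← Limits.biprod.lift_snd f g]; erw [comp_apply]; erw [hx']; rw [map_zero]
      simp only [f, g, Submodule.mapQ_apply, LinearMap.id_coe, id_eq] at hf hg
      have hmN : m ∈ N := (Submodule.Quotient.mk_eq_zero _).mp hf
      have hmN' : m ∈ N' := (Submodule.Quotient.mk_eq_zero _).mp hg
      exact (Submodule.Quotient.mk_eq_zero _).mpr ⟨hmN, hmN'⟩
    exact ann_of_mono α i (ann_biprod α hN hN')
  have : ¬ (N ⊓ N' < N) := hmin _ hinf
  have heq : N ⊓ N' = N := by
    rcases lt_or_eq_of_le (inf_le_left : N ⊓ N' ≤ N) with h | h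
    · exact absurd h this
    · exact h
  rw [← heq]
  exact inf_le_right
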